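/- For a constant-action X-program (P, θ) with output X, and uniform a, d over F_2^n: P(X·sᵀ = 0) = (1/2)(1 + E_a[exp(iθ·Σ_{p∈P}(−1)^{p·aᵀ}(1 − (−1)^{p·sᵀ}))]), and in particular the right-hand side is real. -/

import Mathlib

/-- Hamming weight of a binary vector: number of coordinates equal to 1. -/
def wt {ι : Type*} [Fintype ι] (a : ι → ZMod 2) : ℕ :=
  (Finset.univ.filter fun i => a i = 1).card

/-- Output distribution of the constant-action X-program given by the k-by-n binary
matrix `P` with action `θ`: `P(X = x)`. -/
noncomputable def XProb {k n : ℕ} (P : Matrix (Fin k) (Fin n) (ZMod 2)) (θ : ℝ)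
    (x : Fin n → ZMod 2) : ℝ :=
  ‖∑ a ∈ Finset.univ.filter (fun a : Fin k → ZMod 2 => Matrix.vecMul a P = x),
    (Real.cos θ : ℂ) ^ (k - wt a) * (Complex.I * Real.sin θ) ^ (wt a)‖ ^ 2

/-- The bias of the X-program output distribution in direction `s`:
`P(X ⬝ sᵀ = 0)`, the probability that the output is orthogonal to `s` over `F₂`. -/
noncomputable def bias {k n : ℕ} (P : Matrix (Fin k) (Fin n) (ZMod 2)) (θ : ℝ)
    (s : Fin n → ZMod 2) : ℝ :=
  ∑ x ∈ Finset.univ.filter (fun x : Fin n → ZMod 2 => dotProduct x s = 0), XProb P θ x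

open Finset Matrix Complex

noncomputable def sgn (z : ZMod 2) : ℂ := if z = 1 then -1 else 1

lemma zmod2_cases (x : ZMod 2) : x = 0 ∨ x = 1 := by revert x; decide

lemma sgn_zero : sgn 0 = 1 := by simp [sgn]
lemma sgn_one : sgn 1 = -1 := by simp [sgn]

lemma sgn_add (x y : ZMod 2) : sgn (x + y) = sgn x * sgn y := by
  rcases zmod2_cases x with h | h <;> rcases zmod2_cases y with h' | h' <;>
    subst h <;> subst h' <;> simp [sgn] <;> decide

lemma sgn_conj (x : ZMod 2) : (starRingEnd ℂ) (sgn x) = sgn x := by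
  rcases zmod2_cases x with h | h <;> subst h <;> simp [sgn]

lemma sgn_sq (x : ZMod 2) : sgn x * sgn x = 1 := by
  rcases zmod2_cases x with h | h <;> subst h <;> simp [sgn]

lemma sgn_sum {ι : Type*} (s : Finset ι) (f : ι → ZMod 2) :
    sgn (∑ j ∈ s, f j) = ∏ j ∈ s, sgn (f j) := by
  classical
  induction s using Finset.induction with
  | empty => simp [sgn_zero]
  | insert a t hx ih => rw [Finset.sum_insert hx, Finset.prod_insert hx, sgn_add, ih]

lemma pi_add_eq_zero_iff {n : ℕ} (u v : Fin n → ZMod 2) : u + v = 0 ↔ v = u := by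
  constructor
  · intro h; funext i
    have h2 : ∀ x y : ZMod 2, x + y = 0 → y = x := by decide
    exact h2 _ _ (congrFun h i)
  · rintro rfl; funext i
    have h2 : ∀ x : ZMod 2, x + x = 0 := by decide
    exact h2 _

lemma sum_sgn_dot {n : ℕ} (u : Fin n → ZMod 2) :
    ∑ v : Fin n → ZMod 2, sgn (u ⬝ᵥ v) = if u = 0 then (2:ℂ)^n else 0 := by
  by_cases hu : u = 0
  · simp [hu, sgn_zero, Finset.card_univ, Fintype.card_fun]
  · rw [if_neg hu]
    obtain ⟨i, hi⟩ : ∃ i, u i = 1 := by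
      rcases Function.ne_iff.mp hu with ⟨i, hi⟩
      exact ⟨i, (zmod2_cases (u i)).resolve_left hi⟩
    set S := ∑ v : Fin n → ZMod 2, sgn (u ⬝ᵥ v) with hS
    have key : S = ∑ v : Fin n → ZMod 2, sgn (u ⬝ᵥ (v + Pi.single i 1)) :=
      (Fintype.sum_equiv (Equiv.addRight (Pi.single i 1)) _ _ (fun v => rfl)).symm
    have term : ∀ v : Fin n → ZMod 2, sgn (u ⬝ᵥ (v + Pi.single i 1)) = - sgn (u ⬝ᵥ v) := by
      intro v
      have : u ⬝ᵥ (v + Pi.single i 1) = u ⬝ᵥ v + 1 := by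
        rw [dotProduct_add, dotProduct_single, hi, one_mul]
      rw [this]
      rcases zmod2_cases (u ⬝ᵥ v) with h | h <;> rw [h] <;> simp [sgn] <;> decide
    have hneg : S = -S := by
      calc S = ∑ v : Fin n → ZMod 2, -(sgn (u ⬝ᵥ v)) := by
              rw [key]; exact Finset.sum_congr rfl fun v _ => term v
        _ = -S := Finset.sum_neg_distrib _
    linear_combination hneg / 2

noncomputable def tA {k : ℕ} (θ : ℝ) (a : Fin k → ZMod 2) : ℂ :=
  (Real.cos θ : ℂ) ^ (k - wt a) * (Complex.I * Real.sin θ) ^ (wt a)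

lemma tA_prod {k : ℕ} (θ : ℝ) (a : Fin k → ZMod 2) :
    tA θ a = ∏ j, (if a j = 1 then Complex.I * (Real.sin θ : ℂ) else (Real.cos θ : ℂ)) := by
  rw [Finset.prod_ite, Finset.prod_const, Finset.prod_const, tA, wt, mul_comm]
  congr 2
  have := Finset.card_filter_add_card_filter_not (s := (Finset.univ : Finset (Fin k)))
    (p := fun j => a j = 1)
  simp only [Finset.card_univ, Fintype.card_fin] at this
  omega

lemma zmod2_sum {M : Type*} [AddCommMonoid M] (f : ZMod 2 → M) :
    ∑ b : ZMod 2, f b = f 0 + f 1 := by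
  have : (Finset.univ : Finset (ZMod 2)) = {0, 1} := by decide
  rw [this, Finset.sum_pair (by decide)]

lemma exp_form (θ : ℝ) (c : ZMod 2) :
    (Real.cos θ : ℂ) + sgn c * (Complex.I * Real.sin θ) = Complex.exp (Complex.I * θ * sgn c) := by
  rcases zmod2_cases c with h | h <;> subst h
  · rw [sgn_zero, mul_one, one_mul, mul_comm Complex.I (θ:ℂ), Complex.exp_mul_I]
    rw [Complex.ofReal_cos, Complex.ofReal_sin]; ring
  · rw [sgn_one]
    have : Complex.I * θ * (-1) = (-θ : ℂ) * Complex.I := by ring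
    rw [this, Complex.exp_mul_I, Complex.cos_neg, Complex.sin_neg]
    rw [Complex.ofReal_cos, Complex.ofReal_sin]; ring

noncomputable def Ffun {k n : ℕ} (P : Matrix (Fin k) (Fin n) (ZMod 2)) (θ : ℝ)
    (v : Fin n → ZMod 2) : ℂ :=
  Complex.exp (Complex.I * θ * ∑ j : Fin k, sgn (P j ⬝ᵥ v))

set_option maxHeartbeats 1000000 in
lemma sum_amp {k n : ℕ} (P : Matrix (Fin k) (Fin n) (ZMod 2)) (θ : ℝ) (w : Fin n → ZMod 2) :
    ∑ a : Fin k → ZMod 2, sgn ((Matrix.vecMul a P) ⬝ᵥ w) * tA θ a = Ffun P θ w := by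
  have step1 : ∀ a : Fin k → ZMod 2, sgn ((Matrix.vecMul a P) ⬝ᵥ w) * tA θ a
      = ∏ j, (sgn (a j * (P j ⬝ᵥ w)) *
          (if a j = 1 then Complex.I * (Real.sin θ : ℂ) else (Real.cos θ : ℂ))) := by
    intro a
    rw [← dotProduct_mulVec, tA_prod, Finset.prod_mul_distrib]
    congr 1
    have : a ⬝ᵥ (P *ᵥ w) = ∑ j, a j * (P j ⬝ᵥ w) := by
      simp [dotProduct, Matrix.mulVec]
    rw [this, sgn_sum]
  simp only [step1]
  rw [show (∑ a : Fin k → ZMod 2, ∏ j, sgn (a j * (P j ⬝ᵥ w)) *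
      (if a j = 1 then Complex.I * (Real.sin θ : ℂ) else (Real.cos θ : ℂ)))
      = ∏ j : Fin k, ∑ b : ZMod 2, sgn (b * (P j ⬝ᵥ w)) *
      (if b = 1 then Complex.I * (Real.sin θ : ℂ) else (Real.cos θ : ℂ)) from
    (Fintype.prod_sum (fun j (b : ZMod 2) => sgn (b * (P j ⬝ᵥ w)) *
      (if b = 1 then Complex.I * (Real.sin θ : ℂ) else (Real.cos θ : ℂ)))).symm]
  have factor : ∀ j : Fin k, (∑ b : ZMod 2, sgn (b * (P j ⬝ᵥ w)) *
      (if b = 1 then Complex.I * (Real.sin θ : ℂ) else (Real.cos θ : ℂ)))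
      = Complex.exp (Complex.I * θ * sgn (P j ⬝ᵥ w)) := by
    intro j
    rw [zmod2_sum]
    simp only [zero_mul, one_mul, sgn_zero]
    simp only [if_true, ite_true]
    exact exp_form θ _
  rw [Finset.prod_congr rfl (fun j _ => factor j), ← Complex.exp_sum]
  rw [Ffun]
  congr 1
  rw [Finset.mul_sum]

noncomputable def ampF {k n : ℕ} (P : Matrix (Fin k) (Fin n) (ZMod 2)) (θ : ℝ)
    (x : Fin n → ZMod 2) : ℂ :=
  ∑ a ∈ Finset.univ.filter (fun a : Fin k → ZMod 2 => Matrix.vecMul a P = x), tA θ a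

noncomputable def Sfun {k n : ℕ} (P : Matrix (Fin k) (Fin n) (ZMod 2)) (θ : ℝ)
    (w : Fin n → ZMod 2) : ℂ :=
  ∑ x : Fin n → ZMod 2, sgn (x ⬝ᵥ w) * (ampF P θ x * (starRingEnd ℂ) (ampF P θ x))

lemma L1 {k n : ℕ} (P : Matrix (Fin k) (Fin n) (ZMod 2)) (θ : ℝ) (w : Fin n → ZMod 2) :
    Sfun P θ w = ∑ a : Fin k → ZMod 2, ∑ b : Fin k → ZMod 2,
        (if Matrix.vecMul b P = Matrix.vecMul a P then
          sgn ((Matrix.vecMul a P) ⬝ᵥ w) * (tA θ a * (starRingEnd ℂ) (tA θ b)) else 0) := by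
  classical
  have expand : ∀ (x : Fin n → ZMod 2) (c : ℂ), sgn (x ⬝ᵥ w) * (ampF P θ x * c)
      = ∑ a ∈ Finset.univ.filter (fun a : Fin k → ZMod 2 => Matrix.vecMul a P = x),
          sgn (x ⬝ᵥ w) * (tA θ a * c) := by
    intro x c
    rw [ampF, Finset.sum_mul, Finset.mul_sum]
  have step1 : Sfun P θ w = ∑ x : Fin n → ZMod 2,
      ∑ a ∈ Finset.univ.filter (fun a : Fin k → ZMod 2 => Matrix.vecMul a P = x),
        sgn ((Matrix.vecMul a P) ⬝ᵥ w) * (tA θ a * (starRingEnd ℂ) (ampF P θ (Matrix.vecMul a P))) := by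
    rw [Sfun]
    refine Finset.sum_congr rfl fun x _ => ?_
    rw [expand x _]
    refine Finset.sum_congr rfl fun a ha => ?_
    have hx : Matrix.vecMul a P = x := (Finset.mem_filter.mp ha).2
    rw [hx]
  rw [step1, Finset.sum_fiberwise Finset.univ (fun a : Fin k → ZMod 2 => Matrix.vecMul a P)]
  refine Finset.sum_congr rfl fun a _ => ?_
  rw [ampF, map_sum, Finset.mul_sum, Finset.mul_sum, ← Finset.sum_filter]

lemma pair_id {n : ℕ} (w u1 u2 : Fin n → ZMod 2) (A B : ℂ) :
    (if u2 = u1 then sgn (u1 ⬝ᵥ w) * (A * B) else 0)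
      = (1/(2:ℂ)^n) * ∑ v : Fin n → ZMod 2,
          (sgn (u1 ⬝ᵥ (w + v)) * A) * (sgn (u2 ⬝ᵥ v) * B) := by
  have hterm : ∀ v : Fin n → ZMod 2, (sgn (u1 ⬝ᵥ (w + v)) * A) * (sgn (u2 ⬝ᵥ v) * B)
      = sgn ((u1 + u2) ⬝ᵥ v) * (sgn (u1 ⬝ᵥ w) * (A * B)) := by
    intro v
    rw [dotProduct_add, add_dotProduct, sgn_add, sgn_add]
    ring
  rw [Finset.sum_congr rfl fun v _ => hterm v, ← Finset.sum_mul, sum_sgn_dot]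
  by_cases h : u2 = u1
  · rw [if_pos h, if_pos ((pi_add_eq_zero_iff u1 u2).mpr h)]
    have h2 : (2:ℂ)^n ≠ 0 := pow_ne_zero _ two_ne_zero
    field_simp
  · rw [if_neg h, if_neg (fun hc => h ((pi_add_eq_zero_iff u1 u2).mp hc))]
    ring

lemma L2 {k n : ℕ} (P : Matrix (Fin k) (Fin n) (ZMod 2)) (θ : ℝ) (w : Fin n → ZMod 2) :
    (∑ a : Fin k → ZMod 2, ∑ b : Fin k → ZMod 2,
        (if Matrix.vecMul b P = Matrix.vecMul a P then
          sgn ((Matrix.vecMul a P) ⬝ᵥ w) * (tA θ a * (starRingEnd ℂ) (tA θ b)) else 0))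
      = (1/(2:ℂ)^n) * ∑ v : Fin n → ZMod 2, Ffun P θ (w + v) * (starRingEnd ℂ) (Ffun P θ v) := by
  classical
  have step1 : ∀ a b : Fin k → ZMod 2,
      (if Matrix.vecMul b P = Matrix.vecMul a P then
        sgn ((Matrix.vecMul a P) ⬝ᵥ w) * (tA θ a * (starRingEnd ℂ) (tA θ b)) else 0)
      = (1/(2:ℂ)^n) * ∑ v : Fin n → ZMod 2,
          (sgn ((Matrix.vecMul a P) ⬝ᵥ (w + v)) * tA θ a) *
          (sgn ((Matrix.vecMul b P) ⬝ᵥ v) * (starRingEnd ℂ) (tA θ b)) :=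
    fun a b => pair_id w _ _ _ _
  rw [Finset.sum_congr rfl fun a _ => Finset.sum_congr rfl fun b _ => step1 a b]
  simp_rw [← Finset.mul_sum]
  congr 1
  rw [Finset.sum_congr rfl fun a (_ : a ∈ Finset.univ) => Finset.sum_comm, Finset.sum_comm]
  refine Finset.sum_congr rfl fun v _ => ?_
  rw [← Fintype.sum_mul_sum, sum_amp]
  congr 1
  rw [← sum_amp P θ v, map_sum]
  refine Finset.sum_congr rfl fun b _ => ?_
  rw [_root_.map_mul, sgn_conj]

lemma L3 {k n : ℕ} (P : Matrix (Fin k) (Fin n) (ZMod 2)) (θ : ℝ) (w v : Fin n → ZMod 2) :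
    Ffun P θ (w + v) * (starRingEnd ℂ) (Ffun P θ v)
      = Complex.exp (Complex.I * θ * ∑ j : Fin k,
          (sgn (P j ⬝ᵥ w) * sgn (P j ⬝ᵥ v) - sgn (P j ⬝ᵥ v))) := by
  have hconj : (starRingEnd ℂ) (Ffun P θ v)
      = Complex.exp (-(Complex.I * θ * ∑ j : Fin k, sgn (P j ⬝ᵥ v))) := by
    rw [Ffun, ← Complex.exp_conj]
    congr 1
    rw [_root_.map_mul, _root_.map_mul, Complex.conj_I, Complex.conj_ofReal, map_sum]
    rw [Finset.sum_congr rfl fun j _ => sgn_conj _]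
    ring
  rw [Ffun, hconj, ← Complex.exp_add]
  congr 1
  have hadd : ∑ j : Fin k, sgn (P j ⬝ᵥ (w + v))
      = ∑ j : Fin k, sgn (P j ⬝ᵥ w) * sgn (P j ⬝ᵥ v) :=
    Finset.sum_congr rfl fun j _ => by rw [dotProduct_add, sgn_add]
  rw [hadd, Finset.sum_sub_distrib]
  ring

lemma S_closed {k n : ℕ} (P : Matrix (Fin k) (Fin n) (ZMod 2)) (θ : ℝ) (w : Fin n → ZMod 2) :
    Sfun P θ w = (1/(2:ℂ)^n) * ∑ v : Fin n → ZMod 2,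
      Complex.exp (Complex.I * θ * ∑ j : Fin k,
        (sgn (P j ⬝ᵥ w) * sgn (P j ⬝ᵥ v) - sgn (P j ⬝ᵥ v))) := by
  rw [L1, L2]
  congr 1
  exact Finset.sum_congr rfl fun v _ => L3 P θ w v

lemma S_zero {k n : ℕ} (P : Matrix (Fin k) (Fin n) (ZMod 2)) (θ : ℝ) :
    Sfun P θ (0 : Fin n → ZMod 2) = 1 := by
  rw [S_closed]
  have hterm : ∀ v : Fin n → ZMod 2,
      Complex.exp (Complex.I * θ * ∑ j : Fin k,
        (sgn (P j ⬝ᵥ (0 : Fin n → ZMod 2)) * sgn (P j ⬝ᵥ v) - sgn (P j ⬝ᵥ v))) = 1 := by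
    intro v
    have : ∀ j : Fin k, sgn (P j ⬝ᵥ (0 : Fin n → ZMod 2)) * sgn (P j ⬝ᵥ v) - sgn (P j ⬝ᵥ v) = 0 := by
      intro j
      rw [dotProduct_zero, sgn_zero, one_mul, sub_self]
    rw [Finset.sum_congr rfl fun j _ => this j]
    simp
  rw [Finset.sum_congr rfl fun v _ => hterm v]
  have h2 : (2:ℂ)^n ≠ 0 := pow_ne_zero _ two_ne_zero
  simp [Finset.card_univ, Fintype.card_fun]

lemma Sfun_def {k n : ℕ} (P : Matrix (Fin k) (Fin n) (ZMod 2)) (θ : ℝ) (w : Fin n → ZMod 2) :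
    Sfun P θ w
      = ∑ x : Fin n → ZMod 2, sgn (x ⬝ᵥ w) * (ampF P θ x * (starRingEnd ℂ) (ampF P θ x)) := rfl

lemma S_s {k n : ℕ} (P : Matrix (Fin k) (Fin n) (ZMod 2)) (θ : ℝ) (s : Fin n → ZMod 2) :
    Sfun P θ s = (1 / (2 : ℂ) ^ n) * ∑ a : Fin n → ZMod 2,
      Complex.exp (Complex.I * θ * ∑ i : Fin k,
        sgn (P i ⬝ᵥ a) * (1 - sgn (P i ⬝ᵥ s))) := by
  rw [S_closed]
  congr 1
  refine Fintype.sum_equiv (Equiv.addRight s) _ _ fun v => ?_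
  simp only [Equiv.coe_addRight]
  have hs : ∑ j : Fin k, (sgn (P j ⬝ᵥ s) * sgn (P j ⬝ᵥ v) - sgn (P j ⬝ᵥ v))
      = ∑ j : Fin k, sgn (P j ⬝ᵥ (v + s)) * (1 - sgn (P j ⬝ᵥ s)) := by
    refine Finset.sum_congr rfl fun j _ => ?_
    rw [dotProduct_add, sgn_add]
    linear_combination sgn (P j ⬝ᵥ v) * sgn_sq (P j ⬝ᵥ s)
  rw [hs]

lemma conj_Eexpr {k n : ℕ} (P : Matrix (Fin k) (Fin n) (ZMod 2)) (θ : ℝ) (s : Fin n → ZMod 2) :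
    (starRingEnd ℂ) ((1 / (2 : ℂ) ^ n) * ∑ a : Fin n → ZMod 2,
      Complex.exp (Complex.I * θ * ∑ i : Fin k, sgn (P i ⬝ᵥ a) * (1 - sgn (P i ⬝ᵥ s))))
      = (1/(2:ℂ)^n) * ∑ v : Fin n → ZMod 2,
          Complex.exp (Complex.I * θ * ∑ j : Fin k,
            (sgn (P j ⬝ᵥ s) * sgn (P j ⬝ᵥ v) - sgn (P j ⬝ᵥ v))) := by
  rw [_root_.map_mul]
  congr 1
  · simp [map_ofNat]
  rw [map_sum]
  refine Finset.sum_congr rfl fun a _ => ?_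
  rw [← Complex.exp_conj]
  congr 1
  rw [_root_.map_mul, _root_.map_mul, Complex.conj_I, Complex.conj_ofReal, map_sum]
  have hterm : ∀ i : Fin k, (starRingEnd ℂ) (sgn (P i ⬝ᵥ a) * (1 - sgn (P i ⬝ᵥ s)))
      = sgn (P i ⬝ᵥ a) * (1 - sgn (P i ⬝ᵥ s)) := by
    intro i
    rw [_root_.map_mul, map_sub, _root_.map_one, sgn_conj, sgn_conj]
  rw [Finset.sum_congr rfl fun i _ => hterm i]
  have : ∑ i : Fin k, sgn (P i ⬝ᵥ a) * (1 - sgn (P i ⬝ᵥ s))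
      = - ∑ i : Fin k, (sgn (P i ⬝ᵥ s) * sgn (P i ⬝ᵥ a) - sgn (P i ⬝ᵥ a)) := by
    rw [← Finset.sum_neg_distrib]
    exact Finset.sum_congr rfl fun i _ => by ring
  rw [this]
  ring

theorem bias_eq_half_one_add_expectation {k n : ℕ} (P : Matrix (Fin k) (Fin n) (ZMod 2))
    (θ : ℝ) (s : Fin n → ZMod 2)
    (E : ℂ)
    (hE : E = (1 / (2 : ℂ) ^ n) * ∑ a : Fin n → ZMod 2,
      Complex.exp (Complex.I * θ * ∑ i : Fin k,
        (if dotProduct (P i) a = 1 then (-1 : ℂ) else 1) *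
          (1 - (if dotProduct (P i) s = 1 then (-1 : ℂ) else 1)))) :
    (bias P θ s : ℂ) = (1 / 2) * (1 + E) ∧ ((1 / 2) * (1 + E)).im = 0 := by
  have hE' : E = (1 / (2 : ℂ) ^ n) * ∑ a : Fin n → ZMod 2,
      Complex.exp (Complex.I * θ * ∑ i : Fin k,
        sgn (P i ⬝ᵥ a) * (1 - sgn (P i ⬝ᵥ s))) := by rw [hE]; rfl
  have hSs : Sfun P θ s = E := by rw [S_s, hE']
  have hconjE : (starRingEnd ℂ) E = E := by
    rw [hE', conj_Eexpr, ← S_closed, hSs]; exact hE'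
  have hXP : ∀ x : Fin n → ZMod 2, ((XProb P θ x : ℝ) : ℂ)
      = ampF P θ x * (starRingEnd ℂ) (ampF P θ x) := by
    intro x
    rw [show XProb P θ x = ‖ampF P θ x‖ ^ 2 from rfl]
    rw [Complex.sq_norm, ← Complex.mul_conj]
  have hbias : (bias P θ s : ℂ) = (1 / 2) * (1 + E) := by
    rw [bias, Complex.ofReal_sum]
    rw [Finset.sum_congr rfl fun x _ => hXP x]
    rw [Finset.sum_filter]
    have step2 : ∀ x : Fin n → ZMod 2,
        (if dotProduct x s = 0 then ampF P θ x * (starRingEnd ℂ) (ampF P θ x) else 0)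
        = (1/2 : ℂ) * (sgn (x ⬝ᵥ (0 : Fin n → ZMod 2)) * (ampF P θ x * (starRingEnd ℂ) (ampF P θ x))
            + sgn (x ⬝ᵥ s) * (ampF P θ x * (starRingEnd ℂ) (ampF P θ x))) := by
      intro x
      rw [dotProduct_zero, sgn_zero]
      rcases zmod2_cases (x ⬝ᵥ s) with h | h
      · rw [if_pos h, h, sgn_zero]; ring
      · rw [if_neg (by rw [h]; decide), h, sgn_one]; ring
    rw [Finset.sum_congr rfl fun x _ => step2 x, ← Finset.mul_sum, Finset.sum_add_distrib]
    rw [← Sfun_def, ← Sfun_def, S_zero, hSs]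
  refine ⟨hbias, ?_⟩
  rw [← Complex.conj_eq_iff_im, _root_.map_mul, map_add, _root_.map_one, hconjE]
  norm_num [map_div₀, map_ofNat]
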